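/- For the vacuum-type parabolic 𝒫 = span{W^n_k : n+k ≥ 0, k ∈ ℤ, n odd positive}, where W^n_k = -(1/2)(t^{k+n}∂_t^n + (-1)^{n+1}∂_t^n t^{k+n}), the set 𝒫 is closed under the Lie bracket of differential operators, i.e., 𝒫 is a Lie subalgebra of 𝒟⁺. -/
import Mathlib


open Polynomial

noncomputable abbrev DOp := ℤ →₀ Polynomial ℂ

/-- `(t^k f(D)) ⬝ (t^l g(D)) = t^{k+l} f(D+l) g(D)`. -/
noncomputable def DOp.mul (a b : DOp) : DOp :=
  a.sum fun k f => b.sum fun l g =>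
    Finsupp.single (k + l) (f.comp (X + C (l : ℂ)) * g)

/-- The commutator bracket of differential operators. -/
noncomputable def DOp.lieb (a b : DOp) : DOp := DOp.mul a b - DOp.mul b a

/-- The falling factorial `[x]_n = x(x-1)⋯(x-n+1)`. -/
noncomputable def falling (n : ℕ) : Polynomial ℂ :=
  ∏ i ∈ Finset.range n, (X - C (i : ℂ))

/-- `W^n_k = -(1/2)(t^{k+n}∂_t^n + (-1)^{n+1}∂_t^n t^{k+n})
          = -(1/2) t^k ([D]_n - [-D-k-1]_n)` for `n` odd. -/
noncomputable def Wnk (n : ℕ) (k : ℤ) : DOp :=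
  Finsupp.single k
    ((-(1 / 2 : ℂ)) • (falling n - (falling n).comp (-X - C ((k : ℂ) + 1))))

noncomputable def wpoly (p : ℕ) (l : ℤ) : Polynomial ℂ :=
  (-(1 / 2 : ℂ)) • (falling p - (falling p).comp (-X - C ((l : ℂ) + 1)))

lemma mul_single (j k : ℤ) (f g : Polynomial ℂ) :
    DOp.mul (Finsupp.single j f) (Finsupp.single k g)
      = Finsupp.single (j + k) (f.comp (X + C (k : ℂ)) * g) := by
  unfold DOp.mul
  rw [Finsupp.sum_single_index (by simp), Finsupp.sum_single_index (by simp)]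

lemma lieb_single (j k : ℤ) (f g : Polynomial ℂ) :
    DOp.lieb (Finsupp.single j f) (Finsupp.single k g)
      = Finsupp.single (j + k)
          (f.comp (X + C (k : ℂ)) * g - g.comp (X + C (j : ℂ)) * f) := by
  unfold DOp.lieb
  rw [mul_single, mul_single, add_comm k j, Finsupp.single_sub]

lemma falling_eval_nat {p b : ℕ} (h : b < p) : (falling p).eval (b : ℂ) = 0 := by
  rw [falling, eval_prod]
  exact Finset.prod_eq_zero (Finset.mem_range.2 h) (by simp)

lemma falling_monic (p : ℕ) : (falling p).Monic :=
  monic_prod_of_monic _ _ fun i _ => monic_X_sub_C _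

lemma falling_natDegree (p : ℕ) : (falling p).natDegree = p := by
  rw [falling, natDegree_prod _ _ (fun i _ => X_sub_C_ne_zero _)]
  simp only [natDegree_X_sub_C, Finset.sum_const, smul_eq_mul, mul_one, Finset.card_range]

lemma sigma_eq (a : ℂ) : (-X - C a : Polynomial ℂ) = -(X + C a) := by ring

lemma sigma_natDegree (a : ℂ) : (-X - C a : Polynomial ℂ).natDegree = 1 := by
  rw [sigma_eq, natDegree_neg, natDegree_X_add_C]

lemma sigma_leadingCoeff (a : ℂ) : (-X - C a : Polynomial ℂ).leadingCoeff = -1 := by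
  rw [sigma_eq, leadingCoeff_neg, (monic_X_add_C a).leadingCoeff]

lemma sigma_comp_sigma (a : ℂ) :
    (-X - C a : Polynomial ℂ).comp (-X - C a) = X := by
  simp [sub_comp, neg_comp]

lemma wpoly_comp (p : ℕ) (l : ℤ) :
    (wpoly p l).comp (-X - C ((l : ℂ) + 1)) = -(wpoly p l) := by
  unfold wpoly
  rw [smul_comp, sub_comp, comp_assoc, sigma_comp_sigma, comp_X]
  rw [smul_sub, smul_sub, neg_sub]

lemma wpoly_coeff (p : ℕ) (hp : Odd p) (l : ℤ) : (wpoly p l).coeff p = -1 := by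
  have h1 : (falling p).coeff p = 1 := by
    have := (falling_monic p).coeff_natDegree
    rwa [falling_natDegree] at this
  have hd : ((falling p).comp (-X - C ((l : ℂ) + 1))).natDegree = p := by
    rw [natDegree_comp, falling_natDegree, sigma_natDegree, mul_one]
  have h2 : ((falling p).comp (-X - C ((l : ℂ) + 1))).coeff p = -1 := by
    have hlc := leadingCoeff_comp (p := falling p) (q := -X - C ((l : ℂ) + 1))
      (by rw [sigma_natDegree]; exact one_ne_zero)
    rw [(falling_monic p).leadingCoeff, sigma_leadingCoeff, one_mul, falling_natDegree,
      hp.neg_one_pow] at hlc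
    have : ((falling p).comp (-X - C ((l : ℂ) + 1))).coeff p
        = ((falling p).comp (-X - C ((l : ℂ) + 1))).leadingCoeff := by
      rw [leadingCoeff, hd]
    rw [this, hlc]
  rw [wpoly, coeff_smul, coeff_sub, h1, h2]
  norm_num

lemma wpoly_natDegree_le (p : ℕ) (l : ℤ) : (wpoly p l).natDegree ≤ p := by
  refine (natDegree_smul_le _ _).trans ((natDegree_sub_le _ _).trans ?_)
  rw [natDegree_comp, falling_natDegree, sigma_natDegree, mul_one]
  simp

lemma wpoly_eval_zero (m : ℕ) (j : ℤ) (hmj : 0 ≤ (m : ℤ) + j) (b : ℤ)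
    (h0 : 0 ≤ b) (h1 : b < -j) : (wpoly m j).eval ((b : ℤ) : ℂ) = 0 := by
  obtain ⟨b', rfl⟩ : ∃ b' : ℕ, (b' : ℤ) = b := ⟨b.toNat, by omega⟩
  have hb : ((-j - 1 - b' : ℤ).toNat : ℤ) = -j - 1 - b' := by omega
  rw [wpoly, eval_smul, eval_sub, eval_comp]
  have e1 : (falling m).eval ((b' : ℤ) : ℂ) = 0 := by
    rw [show (((b' : ℤ) : ℂ)) = ((b' : ℕ) : ℂ) by push_cast; ring]
    exact falling_eval_nat (by omega)
  have e2 : (falling m).eval ((-X - C ((j : ℂ) + 1)).eval ((b' : ℤ) : ℂ)) = 0 := by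
    have hc : (((-j - 1 - (b' : ℤ)).toNat : ℕ) : ℂ) = ((-j - 1 - (b' : ℤ) : ℤ) : ℂ) := by
      exact_mod_cast congrArg (fun z : ℤ => (z : ℂ)) hb
    have hy : (-X - C ((j : ℂ) + 1)).eval ((b' : ℤ) : ℂ)
        = (((-j - 1 - (b' : ℤ)).toNat : ℕ) : ℂ) := by
      rw [hc]; simp only [eval_sub, eval_neg, eval_X, eval_C]; push_cast; ring
    rw [hy]
    exact falling_eval_nat (by omega)
  rw [e1, e2]
  simp

lemma wpoly_eval_anti (p : ℕ) (l : ℤ) (x : ℂ) :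
    (wpoly p l).eval (-x - ((l : ℂ) + 1)) = -((wpoly p l).eval x) := by
  have := congrArg (eval x) (wpoly_comp p l)
  rwa [eval_comp, eval_sub, eval_neg, eval_X, eval_C, eval_neg] at this

lemma key (l : ℤ) (d : ℕ) : ∀ P : Polynomial ℂ, P.natDegree ≤ d →
    P.comp (-X - C ((l : ℂ) + 1)) = -P →
    (∀ a : ℕ, (a : ℤ) < -l → P.eval ((a : ℕ) : ℂ) = 0) →
    P ∈ Submodule.span ℂ {q : Polynomial ℂ |
      ∃ p : ℕ, Odd p ∧ 0 ≤ (p : ℤ) + l ∧ q = wpoly p l} := by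
  induction d using Nat.strong_induction_on with
  | _ d ih =>
  intro P hdeg hanti hvan
  by_cases hP : P = 0
  · rw [hP]; exact Submodule.zero_mem _
  set e := P.natDegree with he
  have hlead : P.leadingCoeff ≠ 0 := leadingCoeff_ne_zero.2 hP
  -- oddness of e
  have hcomp : (P.comp (-X - C ((l : ℂ) + 1))).leadingCoeff
      = P.leadingCoeff * (-1) ^ e := by
    rw [leadingCoeff_comp (by rw [sigma_natDegree]; exact one_ne_zero),
      sigma_leadingCoeff]
  have hpow : (-1 : ℂ) ^ e = -1 := by
    have := hcomp
    rw [hanti, leadingCoeff_neg] at this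
    have h2 : P.leadingCoeff * (-1 : ℂ) = P.leadingCoeff * (-1) ^ e := by
      rw [mul_neg_one]; exact this
    exact (mul_left_cancel₀ hlead h2).symm
  have hodd : Odd e := by
    rcases Nat.even_or_odd e with hev | hod
    · exfalso
      rw [hev.neg_one_pow] at hpow
      norm_num at hpow
    · exact hod
  -- e + l ≥ 0
  have hel : 0 ≤ (e : ℤ) + l := by
    rcases le_or_gt 0 l with hl | hl
    · omega
    · set s := (-l).toNat with hs
      have hsl : (s : ℤ) = -l := by omega
      have hsub : (Finset.range s).image (fun i : ℕ => (i : ℂ)) ⊆ P.roots.toFinset := by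
        intro x hx
        rw [Finset.mem_image] at hx
        obtain ⟨i, hi, rfl⟩ := hx
        rw [Multiset.mem_toFinset, mem_roots hP]
        exact hvan i (by rw [Finset.mem_range] at hi; omega)
      have hcard : s ≤ e := by
        calc s = ((Finset.range s).image (fun i : ℕ => (i : ℂ))).card := by
              rw [Finset.card_image_of_injective _ Nat.cast_injective, Finset.card_range]
          _ ≤ P.roots.toFinset.card := Finset.card_le_card hsub
          _ ≤ Multiset.card P.roots := P.roots.toFinset_card_le
          _ ≤ e := P.card_roots'
      omega
  -- subtract leading term
  set r := wpoly e l with hr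
  have hrc : r.coeff e = -1 := wpoly_coeff e hodd l
  have hrmem : r ∈ {q : Polynomial ℂ | ∃ p : ℕ, Odd p ∧ 0 ≤ (p : ℤ) + l ∧ q = wpoly p l} :=
    ⟨e, hodd, hel, rfl⟩
  set Q := P + P.leadingCoeff • r with hQ
  have hQc : Q.coeff e = 0 := by
    rw [hQ, coeff_add, coeff_smul, hrc, smul_eq_mul, mul_neg_one, leadingCoeff, ← he]
    exact add_neg_cancel _
  have hQdeg : Q.natDegree ≤ e := by
    refine (natDegree_add_le _ _).trans ?_
    simp only [max_le_iff]
    exact ⟨le_refl _, (natDegree_smul_le _ _).trans (wpoly_natDegree_le e l)⟩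
  have hQanti : Q.comp (-X - C ((l : ℂ) + 1)) = -Q := by
    rw [hQ, add_comp, smul_comp, hanti, wpoly_comp]
    rw [smul_neg, neg_add]
  have hQvan : ∀ a : ℕ, (a : ℤ) < -l → Q.eval ((a : ℕ) : ℂ) = 0 := by
    intro a ha
    rw [hQ, eval_add, eval_smul, hvan a ha]
    rw [hr, show ((a : ℕ) : ℂ) = (((a : ℤ) : ℤ) : ℂ) by push_cast; ring,
      wpoly_eval_zero e l hel (a : ℤ) (by positivity) ha]
    simp
  have hQmem : Q ∈ Submodule.span ℂ {q : Polynomial ℂ |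
      ∃ p : ℕ, Odd p ∧ 0 ≤ (p : ℤ) + l ∧ q = wpoly p l} := by
    by_cases hQ0 : Q = 0
    · rw [hQ0]; exact Submodule.zero_mem _
    · have hQne : Q.natDegree ≠ e := by
        intro hc
        exact leadingCoeff_ne_zero.2 hQ0 (by rw [leadingCoeff, hc, hQc])
      have hlt : Q.natDegree < d := by
        have := lt_of_le_of_ne hQdeg hQne
        omega
      exact ih Q.natDegree hlt Q (le_refl _) hQanti hQvan
  have hPQ : P = Q - P.leadingCoeff • r := by rw [hQ]; ring
  rw [hPQ]
  exact Submodule.sub_mem _ hQmem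
    (Submodule.smul_mem _ _ (Submodule.subset_span hrmem))

lemma keyid (fe ge : ℂ → ℂ) (j k : ℂ)
    (hf : ∀ y, fe (-y - (j + 1)) = -fe y) (hg : ∀ y, ge (-y - (k + 1)) = -ge y)
    (s x : ℂ) (hs : s = -x - (j + k + 1)) :
    fe (s + k) * ge s - ge (s + j) * fe s
      = -(fe (x + k) * ge x - ge (x + j) * fe x) := by
  have h1 : fe (s + k) = -fe x := by
    rw [show s + k = -x - (j + 1) by rw [hs]; ring]; exact hf x
  have h3 : ge (s + j) = -ge x := by
    rw [show s + j = -x - (k + 1) by rw [hs]; ring]; exact hg x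
  have hgs : ge s = -ge (x + j) := by
    rw [show s = -(x + j) - (k + 1) by rw [hs]; ring]; exact hg (x + j)
  have hfs : fe s = -fe (x + k) := by
    rw [show s = -(x + k) - (j + 1) by rw [hs]; ring]; exact hf (x + k)
  rw [h1, h3, hgs, hfs]; ring


/-- the set `𝒫 = span{W^n_k : n + k ≥ 0, n odd positive}` is closed
under the Lie bracket of differential operators, i.e. `𝒫` is a Lie subalgebra
of `𝒟⁺`. -/
theorem vacuum_parabolic_closed_under_bracket
    (m : ℕ) (j : ℤ) (n : ℕ) (k : ℤ)
    (hm : Odd m) (hn : Odd n) (hmj : 0 ≤ (m : ℤ) + j) (hnk : 0 ≤ (n : ℤ) + k) :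
    DOp.lieb (Wnk m j) (Wnk n k) ∈
      Submodule.span ℂ {a : DOp | ∃ (p : ℕ) (l : ℤ),
        Odd p ∧ 0 ≤ (p : ℤ) + l ∧ a = Wnk p l} := by
  have hW : ∀ (p : ℕ) (l : ℤ), Wnk p l = Finsupp.single l (wpoly p l) := fun _ _ => rfl
  set f := wpoly m j with hf
  set g := wpoly n k with hg
  set P : Polynomial ℂ := f.comp (X + C (k : ℂ)) * g - g.comp (X + C (j : ℂ)) * f with hPdef
  have hlieb : DOp.lieb (Wnk m j) (Wnk n k) = Finsupp.single (j + k) P := by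
    rw [hW, hW, lieb_single]
  -- antisymmetry of P
  have hanti : P.comp (-X - C (((j + k : ℤ) : ℂ) + 1)) = -P := by
    apply Polynomial.funext
    intro x
    simp only [hPdef, eval_comp, eval_mul, eval_sub, eval_neg, eval_add, eval_X, eval_C]
    exact keyid (fun y => f.eval y) (fun y => g.eval y) (j : ℂ) (k : ℂ)
      (fun y => wpoly_eval_anti m j y) (fun y => wpoly_eval_anti n k y)
      (-x - (((j + k : ℤ) : ℂ) + 1)) x (by push_cast; ring)
  -- vanishing of P
  have hvan : ∀ a : ℕ, (a : ℤ) < -(j + k) → P.eval ((a : ℕ) : ℂ) = 0 := by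
    intro a ha
    have hfz : ∀ b : ℤ, 0 ≤ b → b < -j → f.eval ((b : ℤ) : ℂ) = 0 :=
      fun b h0 h1 => wpoly_eval_zero m j hmj b h0 h1
    have hgz : ∀ b : ℤ, 0 ≤ b → b < -k → g.eval ((b : ℤ) : ℂ) = 0 :=
      fun b h0 h1 => wpoly_eval_zero n k hnk b h0 h1
    simp only [hPdef, eval_sub, eval_mul, eval_comp, eval_add, eval_X, eval_C]
    have t1 : f.eval ((a : ℂ) + (k : ℂ)) * g.eval (a : ℂ) = 0 := by
      rcases lt_or_ge (a : ℤ) (-k) with h | h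
      · rw [show ((a : ℕ) : ℂ) = (((a : ℤ) : ℤ) : ℂ) by push_cast; ring] at *
        rw [hgz a (by positivity) h, mul_zero]
      · rw [show ((a : ℕ) : ℂ) + (k : ℂ) = (((a : ℤ) + k : ℤ) : ℂ) by push_cast; ring]
        rw [hfz ((a : ℤ) + k) (by omega) (by omega), zero_mul]
    have t2 : g.eval ((a : ℂ) + (j : ℂ)) * f.eval (a : ℂ) = 0 := by
      rcases lt_or_ge (a : ℤ) (-j) with h | h
      · rw [show ((a : ℕ) : ℂ) = (((a : ℤ) : ℤ) : ℂ) by push_cast; ring] at *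
        rw [hfz a (by positivity) h, mul_zero]
      · rw [show ((a : ℕ) : ℂ) + (j : ℂ) = (((a : ℤ) + j : ℤ) : ℂ) by push_cast; ring]
        rw [hgz ((a : ℤ) + j) (by omega) (by omega), zero_mul]
    rw [t1, t2, sub_zero]
  have hspan := key (j + k) P.natDegree P (le_refl _) hanti hvan
  -- transport along lsingle
  have hmap : Finsupp.single (j + k) P ∈
      Submodule.span ℂ {a : DOp | ∃ (p : ℕ) (l : ℤ),
        Odd p ∧ 0 ≤ (p : ℤ) + l ∧ a = Wnk p l} := by
    have h1 : (Finsupp.lsingle (j + k) : Polynomial ℂ →ₗ[ℂ] DOp) P ∈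
        Submodule.map (Finsupp.lsingle (j + k) : Polynomial ℂ →ₗ[ℂ] DOp)
          (Submodule.span ℂ {q : Polynomial ℂ |
            ∃ p : ℕ, Odd p ∧ 0 ≤ (p : ℤ) + (j + k) ∧ q = wpoly p (j + k)}) :=
      Submodule.mem_map_of_mem hspan
    rw [Submodule.map_span] at h1
    refine Submodule.span_le.2 ?_ h1
    rintro a ⟨q, ⟨p, hp, hpl, rfl⟩, rfl⟩
    exact Submodule.subset_span ⟨p, j + k, hp, hpl, (hW p (j + k)).symm⟩
  rw [hlieb]
  exact hmap
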